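/- arXiv:2204.04185 — 4 statements merged into one kernel-verified Lean document; each statement's English description precedes it below -/
import Mathlib

section
/- For every finite connected simple graph G, the worst-case swap routing time satisfies rt_S(G) ≥ 2/c(G) − 1, where c(G) is the vertex expansion of G. -/
/-- A swap round on `G`: a permutation that is a product of transpositions along a
matching of `G`, i.e. an involution moving every non-fixed vertex to a neighbor. -/
def IsSwapRound {V : Type*} (G : SimpleGraph V) (σ : Equiv.Perm V) : Prop :=
  σ * σ = 1 ∧ ∀ v, σ v ≠ v → G.Adj v (σ v)

/-- The swap routing time of a permutation `π` on `G`: the least number of swap rounds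
whose product is `π`. -/
noncomputable def rtS {V : Type*} (G : SimpleGraph V) (π : Equiv.Perm V) : ℕ :=
  sInf {T : ℕ | ∃ L : List (Equiv.Perm V), L.length = T ∧
    (∀ σ ∈ L, IsSwapRound G σ) ∧ L.prod = π}

/-- The worst-case swap routing time of `G`. -/
noncomputable def rtSworst {V : Type*} (G : SimpleGraph V) : ℕ :=
  ⨆ π : Equiv.Perm V, rtS G π

/-- The vertex boundary of a set `X`: vertices outside `X` adjacent to some vertex of `X`. -/
noncomputable def vtxBoundary {V : Type*} [Fintype V] (G : SimpleGraph V) (X : Finset V) :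
    Finset V :=
  @Finset.filter _ (fun v => v ∉ X ∧ ∃ u ∈ X, G.Adj u v) (Classical.decPred _) Finset.univ

/-- The vertex expansion `c(G)`: the minimum over nonempty proper subsets `X` of
`|δX| / min(|X|, |V∖X|)`. -/
noncomputable def vertexExpansion {V : Type*} [Fintype V] [DecidableEq V]
    (G : SimpleGraph V) : ℝ :=
  sInf {r : ℝ | ∃ X : Finset V, X.Nonempty ∧ X ≠ Finset.univ ∧
    r = ((vtxBoundary G X).card : ℝ) / ((min X.card Xᶜ.card : ℕ) : ℝ)}

section Aux

variable {V : Type*} [Fintype V] [DecidableEq V] (G : SimpleGraph V)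

lemma mem_vtxBoundary {X : Finset V} {v : V} :
    v ∈ vtxBoundary G X ↔ v ∉ X ∧ ∃ u ∈ X, G.Adj u v := by
  simp [vtxBoundary]

lemma isSwapRound_swap {a b : V} (h : G.Adj a b) : IsSwapRound G (Equiv.swap a b) := by
  refine ⟨Equiv.swap_mul_self a b, fun v hv => ?_⟩
  rcases (Equiv.swap_apply_ne_self_iff.mp hv).2 with rfl | rfl
  · rwa [Equiv.swap_apply_left]
  · rw [Equiv.swap_apply_right]; exact h.symm

lemma swap_mem_mclosure_of_walk {a b : V} (p : G.Walk a b) :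
    Equiv.swap a b ∈ Submonoid.closure {σ : Equiv.Perm V | IsSwapRound G σ} := by
  induction p with
  | nil =>
    rw [Equiv.swap_self]
    exact Submonoid.one_mem _
  | @cons a c b hac p ih =>
    have hsw : Equiv.swap a c ∈ Submonoid.closure {σ : Equiv.Perm V | IsSwapRound G σ} :=
      Submonoid.subset_closure (isSwapRound_swap G hac)
    by_cases hab : a = b
    · subst hab
      rw [Equiv.swap_self]
      exact Submonoid.one_mem _
    by_cases hcb : c = b
    · subst hcb; exact hsw
    have key : Equiv.swap a c * Equiv.swap c b * Equiv.swap a c = Equiv.swap a b := by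
      have h1 : Equiv.swap a b
          = Equiv.swap ((Equiv.swap a c) c) ((Equiv.swap a c) b) := by
        rw [Equiv.swap_apply_right,
          Equiv.swap_apply_of_ne_of_ne (Ne.symm hab) (fun h => hcb h.symm)]
      rw [h1, Equiv.swap_apply_apply, Equiv.swap_inv]
    rw [← key]
    exact Submonoid.mul_mem _ (Submonoid.mul_mem _ hsw ih) hsw

lemma exists_route (hG : G.Connected) (π : Equiv.Perm V) :
    ∃ L : List (Equiv.Perm V), (∀ σ ∈ L, IsSwapRound G σ) ∧ L.prod = π := by
  have hsub : {σ : Equiv.Perm V | σ.IsSwap} ⊆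
      ↑(Submonoid.closure {σ : Equiv.Perm V | IsSwapRound G σ}) := by
    rintro σ ⟨a, b, hab, rfl⟩
    obtain ⟨p⟩ := hG.preconnected a b
    exact swap_mem_mclosure_of_walk G p
  have htop : π ∈ Submonoid.closure {σ : Equiv.Perm V | IsSwapRound G σ} := by
    have h1 : π ∈ Submonoid.closure {σ : Equiv.Perm V | σ.IsSwap} := by
      rw [Equiv.Perm.mclosure_isSwap]; trivial
    exact Submonoid.closure_le.mpr hsub h1
  obtain ⟨l, hl, hprod⟩ := Submonoid.exists_list_of_mem_closure htop
  exact ⟨l, hl, hprod⟩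

/-- position permutation after `t` rounds when the rounds are applied in list order
`L` being read right-to-left (i.e. `L.prod` applies the last element first). -/
noncomputable def posPerm (L : List (Equiv.Perm V)) (t : ℕ) : Equiv.Perm V :=
  ((L.reverse.take t).reverse).prod

lemma posPerm_zero (L : List (Equiv.Perm V)) : posPerm L 0 = 1 := by
  simp [posPerm]

lemma posPerm_length (L : List (Equiv.Perm V)) : posPerm L L.length = L.prod := by
  simp [posPerm, List.take_of_length_le (le_of_eq (@List.length_reverse _ L))]

lemma posPerm_succ (L : List (Equiv.Perm V)) (t : ℕ) (ht : t < L.length) :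
    posPerm L (t + 1) = L.reverse.get ⟨t, by simpa using ht⟩ * posPerm L t := by
  have ht' : t < L.reverse.length := by simpa using ht
  have h : L.reverse.take (t + 1) = L.reverse.take t ++ [L.reverse.get ⟨t, ht'⟩] := by
    rw [List.take_succ, List.getElem?_eq_getElem ht']
    rfl
  simp [posPerm, h]

lemma crossing_bound (X : Finset V) (L : List (Equiv.Perm V))
    (hL : ∀ σ ∈ L, IsSwapRound G σ) (S : Finset V)
    (hS : ∀ u ∈ S, (u ∈ X ∧ L.prod u ∉ X) ∨ (u ∉ X ∧ L.prod u ∈ X)) :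
    S.card ≤ (L.length + 1) * (vtxBoundary G X).card := by
  classical
  set T := L.length with hT
  -- each token visits the boundary at some time ≤ T
  have key : ∀ u ∈ S, ∃ t, t ≤ T ∧ posPerm L t u ∈ vtxBoundary G X := by
    intro u hu
    rcases hS u hu with ⟨hu1, hu2⟩ | ⟨hu1, hu2⟩
    · -- token leaves X
      have hex : ∃ t, posPerm L t u ∉ X := ⟨T, by rwa [posPerm_length]⟩
      have ht₀ : posPerm L (Nat.find hex) u ∉ X := Nat.find_spec hex
      have ht₀le : Nat.find hex ≤ T := Nat.find_le (by rwa [posPerm_length])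
      have ht₀pos : Nat.find hex ≠ 0 := by
        intro h
        apply ht₀
        rw [h, posPerm_zero]; simpa using hu1
      obtain ⟨s, hs⟩ : ∃ s, Nat.find hex = s + 1 :=
        ⟨Nat.find hex - 1, (Nat.succ_pred_eq_of_pos (Nat.pos_of_ne_zero ht₀pos)).symm⟩
      rw [hs] at ht₀
      have hsX : posPerm L s u ∈ X := by
        by_contra h
        have h2 : Nat.find hex ≤ s := Nat.find_le h
        omega
      have hsT : s < T := by omega
      set σ := L.reverse.get ⟨s, by simpa using hsT⟩ with hσ
      have hσmem : σ ∈ L := by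
        have := List.get_mem L.reverse ⟨s, by simpa using hsT⟩
        rwa [List.mem_reverse] at this
      have hround := hL σ hσmem
      have hstep : posPerm L (s + 1) u = σ (posPerm L s u) := by
        rw [posPerm_succ L s hsT]; rfl
      refine ⟨s + 1, by omega, ?_⟩
      rw [mem_vtxBoundary]
      refine ⟨ht₀, posPerm L s u, hsX, ?_⟩
      have hne : σ (posPerm L s u) ≠ posPerm L s u := by
        intro h
        rw [hstep, h] at ht₀; exact ht₀ hsX
      have := hround.2 _ hne
      rwa [← hstep] at this
    · -- token enters X
      have hex : ∃ t, posPerm L t u ∈ X := ⟨T, by rwa [posPerm_length]⟩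
      have ht₀ : posPerm L (Nat.find hex) u ∈ X := Nat.find_spec hex
      have ht₀le : Nat.find hex ≤ T := Nat.find_le (by rwa [posPerm_length])
      have ht₀pos : Nat.find hex ≠ 0 := by
        intro h
        rw [h, posPerm_zero] at ht₀; simp at ht₀; exact hu1 ht₀
      obtain ⟨s, hs⟩ : ∃ s, Nat.find hex = s + 1 :=
        ⟨Nat.find hex - 1, (Nat.succ_pred_eq_of_pos (Nat.pos_of_ne_zero ht₀pos)).symm⟩
      rw [hs] at ht₀
      have hsX : posPerm L s u ∉ X := by
        intro h
        have h2 : Nat.find hex ≤ s := Nat.find_le h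
        omega
      have hsT : s < T := by omega
      set σ := L.reverse.get ⟨s, by simpa using hsT⟩ with hσ
      have hσmem : σ ∈ L := by
        have := List.get_mem L.reverse ⟨s, by simpa using hsT⟩
        rwa [List.mem_reverse] at this
      have hround := hL σ hσmem
      have hstep : posPerm L (s + 1) u = σ (posPerm L s u) := by
        rw [posPerm_succ L s hsT]; rfl
      refine ⟨s, by omega, ?_⟩
      rw [mem_vtxBoundary]
      refine ⟨hsX, posPerm L (s + 1) u, ht₀, ?_⟩
      have hback : σ (posPerm L (s + 1) u) = posPerm L s u := by
        rw [hstep, ← Equiv.Perm.mul_apply, hround.1, Equiv.Perm.one_apply]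
      have hne : σ (posPerm L (s + 1) u) ≠ posPerm L (s + 1) u := by
        rw [hback]
        intro h
        rw [h] at hsX; exact hsX ht₀
      have := hround.2 _ hne
      rwa [hback] at this
  -- choice of visiting time
  have key' : ∀ u : V, ∃ t, u ∈ S → (t ≤ T ∧ posPerm L t u ∈ vtxBoundary G X) := by
    intro u
    by_cases hu : u ∈ S
    · obtain ⟨t, ht⟩ := key u hu
      exact ⟨t, fun _ => ht⟩
    · exact ⟨0, fun h => absurd h hu⟩
  choose tof htof using key'
  have hcard : S.card ≤ ((Finset.range (T + 1)) ×ˢ (vtxBoundary G X)).card := by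
    apply Finset.card_le_card_of_injOn (fun u => (tof u, posPerm L (tof u) u))
    · intro u hu
      rw [Finset.mem_coe, Finset.mem_product, Finset.mem_range]
      exact ⟨Nat.lt_succ_of_le (htof u hu).1, (htof u hu).2⟩
    · intro u hu u' hu' h
      have h1 : tof u = tof u' := congrArg Prod.fst h
      have h2 : posPerm L (tof u) u = posPerm L (tof u') u' := congrArg Prod.snd h
      rw [← h1] at h2
      exact (posPerm L (tof u)).injective h2
  rwa [Finset.card_product, Finset.card_range] at hcard

/-- A permutation exchanging two disjoint finsets of the same cardinality. -/
lemma exists_exchange_perm (A B : Finset V) (hd : Disjoint A B) (hcard : A.card = B.card) :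
    ∃ π : Equiv.Perm V, (∀ u ∈ A, π u ∈ B) ∧ (∀ u ∈ B, π u ∈ A) := by
  classical
  obtain ⟨e⟩ : Nonempty ((A : Finset V) ≃ (B : Finset V)) := ⟨Finset.equivOfCardEq hcard⟩
  set g : V → V := fun v =>
    if h : v ∈ A then (e ⟨v, h⟩ : V)
    else if h : v ∈ B then (e.symm ⟨v, h⟩ : V)
    else v with hg
  have hgA : ∀ v (h : v ∈ A), g v = (e ⟨v, h⟩ : V) := by
    intro v h; simp [hg, h]
  have hgB : ∀ v (h : v ∈ B), g v = (e.symm ⟨v, h⟩ : V) := by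
    intro v h
    have hvA : v ∉ A := fun hA => (Finset.disjoint_left.mp hd) hA h
    simp [hg, hvA, h]
  have hinv : Function.Involutive g := by
    intro v
    by_cases hA : v ∈ A
    · rw [hgA v hA]
      have hB : ((e ⟨v, hA⟩ : (B : Finset V)) : V) ∈ B := (e ⟨v, hA⟩).2
      rw [hgB _ hB]
      simp
    · by_cases hB : v ∈ B
      · rw [hgB v hB]
        have hA' : ((e.symm ⟨v, hB⟩ : (A : Finset V)) : V) ∈ A := (e.symm ⟨v, hB⟩).2
        rw [hgA _ hA']
        simp
      · have : g v = v := by simp [hg, hA, hB]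
        rw [this, this]
  refine ⟨hinv.toPerm g, fun u hu => ?_, fun u hu => ?_⟩
  · show g u ∈ B
    rw [hgA u hu]; exact (e ⟨u, hu⟩).2
  · show g u ∈ A
    rw [hgB u hu]; exact (e.symm ⟨u, hu⟩).2

lemma vtxBoundary_nonempty (hG : G.Connected) {X : Finset V} (hne : X.Nonempty)
    (hproper : X ≠ Finset.univ) : (vtxBoundary G X).Nonempty := by
  classical
  obtain ⟨u, hu⟩ := hne
  obtain ⟨w, hw⟩ : ∃ w, w ∉ X := by
    by_contra h
    push_neg at h
    exact hproper (Finset.eq_univ_iff_forall.mpr h)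
  obtain ⟨p⟩ := hG.preconnected u w
  clear hproper
  induction p with
  | nil => exact absurd hu hw
  | @cons a c b hac p ih =>
    by_cases hc : c ∈ X
    · exact ih hc hw
    · exact ⟨c, (mem_vtxBoundary G).mpr ⟨hc, a, hu, hac⟩⟩

end Aux

/-- Isoperimetric lower bound: for every finite connected simple graph `G`,
`rt_S(G) ≥ 2 / c(G) − 1`. -/
theorem swap_routing_time_ge_expansion {V : Type*} [Fintype V] [DecidableEq V]
    (G : SimpleGraph V) (hG : G.Connected) :
    2 / vertexExpansion G - 1 ≤ (rtSworst G : ℝ) := by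
  classical
  set Sset : Set ℝ := {r : ℝ | ∃ X : Finset V, X.Nonempty ∧ X ≠ Finset.univ ∧
    r = ((vtxBoundary G X).card : ℝ) / ((min X.card Xᶜ.card : ℕ) : ℝ)} with hSset
  by_cases hex : ∃ X : Finset V, X.Nonempty ∧ X ≠ Finset.univ
  · -- main case
    have hfin : Sset.Finite := by
      apply Set.Finite.subset (Set.finite_range
        (fun X : Finset V => ((vtxBoundary G X).card : ℝ) / ((min X.card Xᶜ.card : ℕ) : ℝ)))
      rintro r ⟨X, _, _, hr⟩
      exact ⟨X, hr.symm⟩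
    have hne : Sset.Nonempty := by
      obtain ⟨X, h1, h2⟩ := hex
      exact ⟨_, X, h1, h2, rfl⟩
    have hmem : vertexExpansion G ∈ Sset := Set.Nonempty.csInf_mem hne hfin
    obtain ⟨X, hXne, hXuniv, hc⟩ := hmem
    set m := min X.card Xᶜ.card with hm
    set b := (vtxBoundary G X).card with hb
    have hm1 : 1 ≤ m := by
      have h1 : 1 ≤ X.card := Finset.card_pos.mpr hXne
      have h2 : 1 ≤ Xᶜ.card := by
        apply Finset.card_pos.mpr
        rw [← Finset.card_pos, Finset.card_compl]
        have : X.card < Fintype.card V := by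
          apply lt_of_le_of_ne (Finset.card_le_univ X)
          intro h
          exact hXuniv (Finset.eq_univ_of_card X h)
        omega
      exact le_min h1 h2
    have hb1 : 1 ≤ b := Finset.card_pos.mpr (vtxBoundary_nonempty G hG hXne hXuniv)
    obtain ⟨A, hAX, hAcard⟩ := Finset.exists_subset_card_eq (min_le_left X.card Xᶜ.card)
    obtain ⟨B, hBXc, hBcard⟩ := Finset.exists_subset_card_eq (min_le_right X.card Xᶜ.card)
    have hdisj : Disjoint A B := by
      apply Finset.disjoint_left.mpr
      intro u huA huB
      exact (Finset.mem_compl.mp (hBXc huB)) (hAX huA)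
    obtain ⟨π, hπA, hπB⟩ := exists_exchange_perm A B hdisj (hAcard.trans hBcard.symm)
    -- route π
    obtain ⟨L₀, hL₀, hL₀prod⟩ := exists_route G hG π
    have hsetne : {T : ℕ | ∃ L : List (Equiv.Perm V), L.length = T ∧
        (∀ σ ∈ L, IsSwapRound G σ) ∧ L.prod = π}.Nonempty :=
      ⟨L₀.length, L₀, rfl, hL₀, hL₀prod⟩
    obtain ⟨L, hLlen, hLround, hLprod⟩ := Nat.sInf_mem hsetne
    have hcount : (A ∪ B).card ≤ (L.length + 1) * b := by
      apply crossing_bound G X L hLround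
      intro u hu
      rw [Finset.mem_union] at hu
      rcases hu with hu | hu
      · left
        refine ⟨hAX hu, ?_⟩
        rw [hLprod]
        exact Finset.mem_compl.mp (hBXc (hπA u hu))
      · right
        refine ⟨Finset.mem_compl.mp (hBXc hu), ?_⟩
        rw [hLprod]
        exact hAX (hπB u hu)
    have hABcard : (A ∪ B).card = 2 * m := by
      rw [Finset.card_union_of_disjoint hdisj, hAcard, hBcard]; ring
    have hrt : rtS G π ≤ rtSworst G := by
      apply le_ciSup (f := fun π => rtS G π)
      exact Set.Finite.bddAbove (Set.finite_range _)
    have hLrt : L.length = rtS G π := hLlen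
    have hnat : 2 * m ≤ (rtSworst G + 1) * b := by
      calc 2 * m = (A ∪ B).card := hABcard.symm
        _ ≤ (L.length + 1) * b := hcount
        _ ≤ (rtSworst G + 1) * b := by
            apply Nat.mul_le_mul_right
            omega
    -- now real arithmetic
    have hmpos : (0 : ℝ) < m := by exact_mod_cast hm1
    have hbpos : (0 : ℝ) < b := by exact_mod_cast hb1
    have hcval : vertexExpansion G = (b : ℝ) / (m : ℝ) := hc
    rw [hcval]
    rw [div_div_eq_mul_div, sub_le_iff_le_add, div_le_iff₀ hbpos]
    have : (2 : ℝ) * m ≤ ((rtSworst G : ℝ) + 1) * b := by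
      have := hnat
      push_cast
      exact_mod_cast this
    calc (2 : ℝ) * m ≤ ((rtSworst G : ℝ) + 1) * b := this
      _ = ((rtSworst G : ℝ) + 1) * b := rfl
  · -- degenerate case: no nonempty proper subset
    have hempty : Sset = ∅ := by
      rw [Set.eq_empty_iff_forall_notMem]
      rintro r ⟨X, h1, h2, _⟩
      exact hex ⟨X, h1, h2⟩
    have : vertexExpansion G = 0 := by
      show sInf Sset = 0
      rw [hempty, Real.sInf_empty]
    rw [this, div_zero]
    have h0 : (0:ℝ) ≤ (rtSworst G : ℝ) := Nat.cast_nonneg _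
    linarith
end

section
/- Let n ≥ 1 and let L(n) be the graph on vertex set {1, 2, …, 2^n − 1} in which distinct vertices u, v are adjacent if and only if |⌊log₂ u⌋ − ⌊log₂ v⌋| ≤ 1. For u ∈ V(L(n)) with ℓ(u) = ⌊log₂ u⌋, define r(u,0) = u and r(u,i) = 2^{ℓ(u)+i} + u for i ≥ 1. For u < v at graph distance d, define the canonical path P(u,v) = P(v,u) to be the vertex sequence (u, r(u,1), …, r(u,d−1), v). Then for every permutation π of {1, …, 2^n − 1}, each vertex of L(n) lies on at most 4 of the canonical paths in the collection {P(u, π(u)) : u with π(u) ≠ u}. -/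
/-- The vertex set of `L(n)`: the integers `1, …, 2^n − 1`. -/
abbrev LnVert (n : ℕ) := {u : ℕ // u ∈ Finset.Icc 1 (2 ^ n - 1)}

/-- The layer of a vertex `u` is `⌊log₂ u⌋`. -/
def layer (u : ℕ) : ℕ := Nat.log 2 u

/-- The graph `L(n)`: distinct vertices `u, v ∈ {1, …, 2^n − 1}` are adjacent
iff their layers differ by at most 1. -/
def LnGraph (n : ℕ) : SimpleGraph (LnVert n) where
  Adj u v := u ≠ v ∧ ((layer u.val : ℤ) - (layer v.val : ℤ)).natAbs ≤ 1
  symm := by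
    constructor; intro u v h
    exact ⟨h.1.symm, by have := h.2; omega⟩
  loopless := by
    constructor; intro u h
    exact h.1 rfl

/-- `r(u,0) = u` and `r(u,i) = 2^{ℓ(u)+i} + u` for `i ≥ 1`. -/
def rVert (u : ℕ) : ℕ → ℕ
  | 0 => u
  | i + 1 => 2 ^ (layer u + (i + 1)) + u

/-- The vertex sequence of the canonical path between `u < v` at graph distance `d`:
`(u, r(u,1), …, r(u,d−1), v)`. -/
def canonicalPath (u v d : ℕ) : List ℕ :=
  [u] ++ (List.range (d - 1)).map (fun i => rVert u (i + 1)) ++ [v]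

lemma mem_canonicalPath {w u v d : ℕ} (h : w ∈ canonicalPath u v d) :
    w = u ∨ w = v ∨ ∃ i, w = rVert u (i + 1) := by
  unfold canonicalPath at h
  simp [List.mem_append, List.mem_map, List.mem_range] at h
  rcases h with h | ⟨i, _, h⟩ | h
  · exact Or.inl h
  · exact Or.inr (Or.inr ⟨i, h.symm⟩)
  · exact Or.inr (Or.inl h)

lemma sub_of_rVert {u w : ℕ} (hu : 1 ≤ u) (i : ℕ) (h : w = rVert u (i + 1)) :
    u = w - 2 ^ layer w := by
  subst h
  show u = 2 ^ (layer u + (i + 1)) + u - 2 ^ layer (2 ^ (layer u + (i + 1)) + u)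
  have h1 : u < 2 ^ (layer u + (i + 1)) := by
    have := Nat.lt_pow_succ_log_self (by norm_num : 1 < 2) u
    exact lt_of_lt_of_le this (Nat.pow_le_pow_right (by norm_num) (by unfold layer; omega))
  have h2 : layer (2 ^ (layer u + (i + 1)) + u) = layer u + (i + 1) := by
    unfold layer
    refine Nat.log_eq_of_pow_le_of_lt_pow (Nat.le_add_right _ _) ?_
    have : 2 ^ (layer u + (i + 1) + 1) = 2 ^ (layer u + (i + 1)) * 2 := by ring
    unfold layer at h1; omega
  rw [h2]; omega


/-- For every permutation `π` of the vertices of `L(n)`, every vertex lies on at most 4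
of the canonical paths `P(u, π(u))` taken over the non-fixed points `u` of `π`. -/
theorem canonicalPaths_low_congestion (n : ℕ) (hn : 1 ≤ n)
    (π : Equiv.Perm (LnVert n)) (w : LnVert n) :
    (Finset.univ.filter fun u : LnVert n => π u ≠ u ∧
        (w : ℕ) ∈ canonicalPath (min (u : ℕ) (π u : ℕ)) (max (u : ℕ) (π u : ℕ))
          ((LnGraph n).dist u (π u))).card ≤ 4 := by
  set m : ℕ := (w : ℕ) - 2 ^ layer (w : ℕ) with hm
  set S1 : Finset (LnVert n) := Finset.univ.filter (fun x : LnVert n => (x : ℕ) = m) with hS1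
  set S2 : Finset (LnVert n) := Finset.univ.filter (fun x : LnVert n => ((π x : LnVert n) : ℕ) = m) with hS2
  have hc1 : S1.card ≤ 1 := by
    refine Finset.card_le_one.mpr ?_
    intro a ha b hb
    simp [hS1] at ha hb
    exact Subtype.ext (ha.trans hb.symm)
  have hc2 : S2.card ≤ 1 := by
    refine Finset.card_le_one.mpr ?_
    intro a ha b hb
    simp [hS2] at ha hb
    exact π.injective (Subtype.ext (ha.trans hb.symm))
  have hsub : (Finset.univ.filter fun u : LnVert n => π u ≠ u ∧
        (w : ℕ) ∈ canonicalPath (min (u : ℕ) (π u : ℕ)) (max (u : ℕ) (π u : ℕ))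
          ((LnGraph n).dist u (π u))) ⊆ insert w (insert (π.symm w) (S1 ∪ S2)) := by
    intro u hu
    simp only [Finset.mem_filter, Finset.mem_univ, true_and] at hu
    obtain ⟨hne, hmem⟩ := hu
    have hminpos : 1 ≤ min (u : ℕ) ((π u : LnVert n) : ℕ) := by
      have h1 := (Finset.mem_Icc.mp u.2).1
      have h2 := (Finset.mem_Icc.mp (π u).2).1
      exact le_min h1 h2
    have key : (w : ℕ) = min (u : ℕ) ((π u : LnVert n) : ℕ) ∨
        (w : ℕ) = max (u : ℕ) ((π u : LnVert n) : ℕ) ∨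
        min (u : ℕ) ((π u : LnVert n) : ℕ) = m := by
      rcases mem_canonicalPath hmem with h | h | ⟨i, h⟩
      · exact Or.inl h
      · exact Or.inr (Or.inl h)
      · exact Or.inr (Or.inr (sub_of_rVert hminpos i h))
    simp only [Finset.mem_insert]
    have hcases : (w : ℕ) = (u : ℕ) ∨ (w : ℕ) = ((π u : LnVert n) : ℕ) ∨
        (u : ℕ) = m ∨ ((π u : LnVert n) : ℕ) = m := by
      rcases key with h | h | h
      · rcases min_choice (u : ℕ) ((π u : LnVert n) : ℕ) with hc | hc
        · exact Or.inl (h.trans hc)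
        · exact Or.inr (Or.inl (h.trans hc))
      · rcases max_choice (u : ℕ) ((π u : LnVert n) : ℕ) with hc | hc
        · exact Or.inl (h.trans hc)
        · exact Or.inr (Or.inl (h.trans hc))
      · rcases min_choice (u : ℕ) ((π u : LnVert n) : ℕ) with hc | hc
        · exact Or.inr (Or.inr (Or.inl (hc.symm.trans h)))
        · exact Or.inr (Or.inr (Or.inr (hc.symm.trans h)))
    rcases hcases with h | h | h | h
    · exact Or.inl (Subtype.ext h.symm)
    · refine Or.inr (Or.inl ?_)
      have hpw : π u = w := Subtype.ext h.symm
      rw [← hpw, Equiv.symm_apply_apply]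
    · refine Or.inr (Or.inr ?_)
      simp only [Finset.mem_union, hS1, hS2, Finset.mem_filter, Finset.mem_univ, true_and]
      exact Or.inl h
    · refine Or.inr (Or.inr ?_)
      simp only [Finset.mem_union, hS1, hS2, Finset.mem_filter, Finset.mem_univ, true_and]
      exact Or.inr h
  have A := Finset.card_insert_le w (insert (π.symm w) (S1 ∪ S2))
  have B := Finset.card_insert_le (π.symm w) (S1 ∪ S2)
  have C := Finset.card_union_le S1 S2
  have D := Finset.card_le_card hsub
  omega
end

section
/- Let N and l be positive integers with l dividing N and l ≥ 2, and let W_{N+1} be the wheel graph on vertices {1, …, N+1}, with rim edges {i, i+1 mod N} for i ∈ {1, …, N} (indices taken in {1,…,N}) and hub edges {i, N+1} for all i ∈ {1, …, N}. Let π be the permutation that, for each j ∈ {0, 1, …, l−1}, exchanges vertex jN/l + 1 with vertex (j+1)N/l, and fixes all other vertices. Then the swap routing time satisfies rt_S(W_{N+1}, π) ≥ min{2l, N/l − 1}. -/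
/-- The wheel graph on `N + 1` vertices (0-indexed: rim vertices `0, …, N−1` forming an
`N`-cycle, hub vertex `N` adjacent to every rim vertex). -/
def wheelGraph (N : ℕ) : SimpleGraph (Fin (N + 1)) where
  Adj i j := i ≠ j ∧
    ((i.val < N ∧ j.val < N ∧ ((i.val + 1) % N = j.val ∨ (j.val + 1) % N = i.val))
      ∨ i.val = N ∨ j.val = N)
  symm := by
    constructor
    intro i j h
    exact ⟨h.1.symm, by tauto⟩
  loopless := ⟨fun i h => h.1 rfl⟩

/-- The permutation `π_wheel^l` exchanging, for each `j < l`, the rim vertex `j·(N/l)`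
with the rim vertex `(j+1)·(N/l) − 1` (0-indexed; these are the vertices `j·N/l + 1` and
`(j+1)·N/l` in 1-indexed notation), and fixing all other vertices. -/
def wheelPerm (N l : ℕ) : Equiv.Perm (Fin (N + 1)) :=
  ((List.range l).map fun j =>
    Equiv.swap (⟨j * (N / l) % (N + 1), Nat.mod_lt _ (Nat.succ_pos N)⟩ : Fin (N + 1))
      ⟨((j + 1) * (N / l) - 1) % (N + 1), Nat.mod_lt _ (Nat.succ_pos N)⟩).prod

section Aux

open Equiv

lemma listProd_fix {V : Type*} (L : List (Equiv.Perm V)) (x : V)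
    (h : ∀ σ ∈ L, σ x = x) : L.prod x = x := by
  induction L with
  | nil => rfl
  | cons σ L ih =>
    rw [List.prod_cons, Equiv.Perm.mul_apply, ih (fun τ hτ => h τ (List.mem_cons_of_mem _ hτ)),
      h σ List.mem_cons_self]

lemma listProd_split {V : Type*} (L₁ L₂ : List (Equiv.Perm V)) (σ : Equiv.Perm V) (x y : V)
    (hσ : σ x = y) (h1 : ∀ τ ∈ L₁, τ y = y) (h2 : ∀ τ ∈ L₂, τ x = x) :
    (L₁ ++ σ :: L₂).prod x = y := by
  rw [List.prod_append, List.prod_cons, Equiv.Perm.mul_apply, Equiv.Perm.mul_apply,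
    listProd_fix L₂ x h2, hσ, listProd_fix L₁ y h1]

/-- left endpoint of the `j`-th swap. -/
def WA (N l j : ℕ) : Fin (N + 1) := ⟨j * (N / l) % (N + 1), Nat.mod_lt _ (Nat.succ_pos N)⟩
/-- right endpoint of the `j`-th swap. -/
def WB (N l j : ℕ) : Fin (N + 1) := ⟨((j + 1) * (N / l) - 1) % (N + 1), Nat.mod_lt _ (Nat.succ_pos N)⟩

lemma wheelPerm_eq (N l : ℕ) :
    wheelPerm N l = ((List.range l).map fun j => Equiv.swap (WA N l j) (WB N l j)).prod := rfl

variable {N l : ℕ}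

section Vals

variable (hl : 2 ≤ l) (hdvd : l ∣ N) (hm : 2 ≤ N / l)

include hl hdvd

lemma hNlm : N = l * (N / l) := (Nat.mul_div_cancel' hdvd).symm

lemma mul_div_le {j : ℕ} (hj : j < l) : j * (N / l) + N / l ≤ N := by
  have h := hNlm hl hdvd (N := N)
  have h1 : (j + 1) * (N / l) ≤ l * (N / l) := Nat.mul_le_mul_right _ (by omega)
  rw [Nat.add_mul, one_mul] at h1
  omega

lemma WA_val {j : ℕ} (hj : j < l) : (WA N l j).val = j * (N / l) := by
  have h := mul_div_le hl hdvd hj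
  show j * (N / l) % (N + 1) = j * (N / l)
  exact Nat.mod_eq_of_lt (Nat.lt_succ_of_le (le_trans (Nat.le_add_right _ _) h))

lemma WB_val {j : ℕ} (hj : j < l) : (WB N l j).val = j * (N / l) + (N / l) - 1 := by
  have h := mul_div_le hl hdvd hj
  have h2 : (j + 1) * (N / l) = j * (N / l) + N / l := by rw [Nat.add_mul, one_mul]
  show ((j + 1) * (N / l) - 1) % (N + 1) = j * (N / l) + N / l - 1
  rw [h2]
  generalize N / l = m at h ⊢
  generalize j * m = a at h ⊢
  exact Nat.mod_eq_of_lt (by omega)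

include hm

lemma WB_val' {j : ℕ} (hj : j < l) : (WB N l j).val = j * (N / l) + (N / l - 1) := by
  rw [WB_val hl hdvd hj]
  generalize N / l = m at hm ⊢
  generalize j * m = a
  omega

lemma WA_ne_WB {i j : ℕ} (hi : i < l) (hj : j < l) : WA N l i ≠ WB N l j := by
  intro h
  have h' : (WA N l i).val = (WB N l j).val := congrArg Fin.val h
  rw [WA_val hl hdvd hi, WB_val' hl hdvd hm hj] at h'
  rcases le_or_gt i j with hij | hij
  · have h2 : i * (N / l) ≤ j * (N / l) := Nat.mul_le_mul_right _ hij
    generalize N / l = m at hm h' h2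
    generalize i * m = a at h' h2
    generalize j * m = b at h' h2
    omega
  · have h2 : (j + 1) * (N / l) ≤ i * (N / l) := Nat.mul_le_mul_right _ hij
    rw [Nat.add_mul, one_mul] at h2
    generalize N / l = m at hm h' h2
    generalize i * m = a at h' h2
    generalize j * m = b at h' h2
    omega

lemma WA_inj {i j : ℕ} (hi : i < l) (hj : j < l) (h : WA N l i = WA N l j) : i = j := by
  have h' : (WA N l i).val = (WA N l j).val := congrArg Fin.val h
  rw [WA_val hl hdvd hi, WA_val hl hdvd hj] at h'
  exact Nat.eq_of_mul_eq_mul_right (lt_of_lt_of_le Nat.zero_lt_two hm) h'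

lemma WB_inj {i j : ℕ} (hi : i < l) (hj : j < l) (h : WB N l i = WB N l j) : i = j := by
  have h' : (WB N l i).val = (WB N l j).val := congrArg Fin.val h
  rw [WB_val' hl hdvd hm hi, WB_val' hl hdvd hm hj] at h'
  refine Nat.eq_of_mul_eq_mul_right (lt_of_lt_of_le Nat.zero_lt_two hm) ?_
  exact Nat.add_right_cancel h'

lemma WA_lt {j : ℕ} (hj : j < l) : (WA N l j).val < N := by
  have h := mul_div_le hl hdvd hj
  rw [WA_val hl hdvd hj]
  generalize N / l = m at hm h ⊢
  generalize j * m = a at h ⊢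
  omega

lemma WB_lt {j : ℕ} (hj : j < l) : (WB N l j).val < N := by
  have h := mul_div_le hl hdvd hj
  rw [WB_val' hl hdvd hm hj]
  generalize N / l = m at hm h ⊢
  generalize j * m = a at h ⊢
  omega

omit hl hdvd hm in
lemma range_split {j : ℕ} (hj : j < l) :
    List.range l = List.range j ++ j :: (List.range (l - (j + 1))).map (fun k => (j + 1) + k) := by
  conv_lhs => rw [show l = (j + 1) + (l - (j + 1)) by omega]
  rw [List.range_add, List.range_succ]
  simp

lemma wheelPerm_WA {j : ℕ} (hj : j < l) : wheelPerm N l (WA N l j) = WB N l j := by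
  rw [wheelPerm_eq, range_split (l := l) hj, List.map_append, List.map_cons]
  apply listProd_split
  · exact Equiv.swap_apply_left _ _
  · intro τ hτ
    rw [List.mem_map] at hτ
    obtain ⟨i, hi, rfl⟩ := hτ
    rw [List.mem_range] at hi
    exact Equiv.swap_apply_of_ne_of_ne
      (fun h => WA_ne_WB hl hdvd hm (by omega) hj h.symm)
      (fun h => (by omega : i ≠ j) (WB_inj hl hdvd hm hj (by omega) h).symm)
  · intro τ hτ
    rw [List.map_map, List.mem_map] at hτ
    obtain ⟨k, hk, rfl⟩ := hτ
    rw [List.mem_range] at hk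
    dsimp only [Function.comp]
    exact Equiv.swap_apply_of_ne_of_ne
      (fun h => (by omega : j ≠ j + 1 + k) (WA_inj hl hdvd hm hj (by omega) h))
      (WA_ne_WB hl hdvd hm hj (by omega))

lemma wheelPerm_WB {j : ℕ} (hj : j < l) : wheelPerm N l (WB N l j) = WA N l j := by
  rw [wheelPerm_eq, range_split (l := l) hj, List.map_append, List.map_cons]
  apply listProd_split
  · exact Equiv.swap_apply_right _ _
  · intro τ hτ
    rw [List.mem_map] at hτ
    obtain ⟨i, hi, rfl⟩ := hτ
    rw [List.mem_range] at hi
    exact Equiv.swap_apply_of_ne_of_ne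
      (fun h => (by omega : j ≠ i) (WA_inj hl hdvd hm hj (by omega) h))
      (WA_ne_WB hl hdvd hm hj (by omega))
  · intro τ hτ
    rw [List.map_map, List.mem_map] at hτ
    obtain ⟨k, hk, rfl⟩ := hτ
    rw [List.mem_range] at hk
    dsimp only [Function.comp]
    exact Equiv.swap_apply_of_ne_of_ne
      (fun h => WA_ne_WB hl hdvd hm (by omega) hj h.symm)
      (fun h => (by omega : j ≠ j + 1 + k) (WB_inj hl hdvd hm hj (by omega) h))

lemma routing_set_nonempty :
    {T : ℕ | ∃ L : List (Equiv.Perm (Fin (N + 1))), L.length = T ∧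
      (∀ σ ∈ L, IsSwapRound (wheelGraph N) σ) ∧ L.prod = wheelPerm N l}.Nonempty := by
  classical
  set hub : Fin (N + 1) := ⟨N, Nat.lt_succ_self N⟩ with hhub
  have hub_val : hub.val = N := rfl
  have hround : ∀ x : Fin (N + 1), x.val < N → IsSwapRound (wheelGraph N) (Equiv.swap x hub) := by
    intro x hx
    have hxhub : x ≠ hub := by
      intro h; rw [h, hub_val] at hx; exact lt_irrefl _ hx
    constructor
    · exact Equiv.swap_mul_self x hub
    · intro v hv
      rcases eq_or_ne v x with rfl | hvx
      · rw [Equiv.swap_apply_left]; exact (show _ ∧ _ from ⟨hxhub, Or.inr (Or.inr hub_val)⟩)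
      · rcases eq_or_ne v hub with rfl | hvh
        · rw [Equiv.swap_apply_right]; exact (show _ ∧ _ from ⟨hxhub.symm, Or.inr (Or.inl hub_val)⟩)
        · rw [Equiv.swap_apply_of_ne_of_ne hvx hvh] at hv; exact absurd rfl hv
  refine ⟨_, ((List.range l).map (fun j => [Equiv.swap (WA N l j) hub,
      Equiv.swap (WB N l j) hub, Equiv.swap (WA N l j) hub])).flatten, rfl, ?_, ?_⟩
  · intro σ hσ
    rw [List.mem_flatten] at hσ
    obtain ⟨Lj, hLj, hσLj⟩ := hσ
    rw [List.mem_map] at hLj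
    obtain ⟨j, hj, rfl⟩ := hLj
    rw [List.mem_range] at hj
    have hjA := WA_lt hl hdvd hm hj
    have hjB := WB_lt hl hdvd hm hj
    simp only [List.mem_cons, List.not_mem_nil, or_false] at hσLj
    rcases hσLj with rfl | rfl | rfl
    · exact hround _ hjA
    · exact hround _ hjB
    · exact hround _ hjA
  · rw [List.prod_flatten, List.map_map, wheelPerm_eq]
    congr 1
    apply List.map_congr_left
    intro j hj
    rw [List.mem_range] at hj
    have hBhub : WB N l j ≠ hub := by
      intro h
      have := WB_lt hl hdvd hm hj
      rw [h, hub_val] at this; exact lt_irrefl _ this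
    have hBA : WB N l j ≠ WA N l j := fun h => WA_ne_WB hl hdvd hm hj hj h.symm
    show ([Equiv.swap (WA N l j) hub, Equiv.swap (WB N l j) hub,
        Equiv.swap (WA N l j) hub]).prod = _
    rw [List.prod_cons, List.prod_cons, List.prod_cons, List.prod_nil, mul_one, ← mul_assoc,
      Equiv.swap_comm (WA N l j) hub, Equiv.swap_mul_swap_mul_swap hBhub hBA]

lemma main_bound
    (L : List (Equiv.Perm (Fin (N + 1))))
    (hr : ∀ σ ∈ L, IsSwapRound (wheelGraph N) σ) (hprod : L.prod = wheelPerm N l) :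
    min (2 * l) (N / l - 1) ≤ L.length := by
  classical
  set T := L.length with hT
  have hNlm' : N = l * (N / l) := hNlm hl hdvd
  have h2m : 2 * (N / l) ≤ N := by
    have := Nat.mul_le_mul_right (N / l) hl
    omega
  have hN : 0 < N := by
    have := Nat.mul_le_mul hl hm
    omega
  set p : ℕ → Equiv.Perm (Fin (N + 1)) := fun t => (L.drop (T - t)).prod with hp
  have hp0 : ∀ v, p 0 v = v := by
    intro v
    show ((L.drop (T - 0)).prod : Equiv.Perm _) v = v
    rw [Nat.sub_zero, hT, List.drop_length, List.prod_nil, Equiv.Perm.one_apply]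
  have hpT : p T = wheelPerm N l := by
    show (L.drop (T - T)).prod = _
    rw [Nat.sub_self, List.drop_zero, hprod]
  have hstep : ∀ t, t < T → ∀ v, p (t + 1) v = p t v ∨
      (wheelGraph N).Adj (p t v) (p (t + 1) v) := by
    intro t ht v
    have hidx : T - t - 1 < L.length := by omega
    have hd : L.drop (T - (t + 1)) = L[T - t - 1] :: L.drop (T - t) := by
      have h1 : T - (t + 1) = T - t - 1 := by omega
      have h3 : T - t - 1 + 1 = T - t := by omega
      rw [h1, List.drop_eq_getElem_cons hidx, h3]
    have hσ := hr (L[T - t - 1]) (List.getElem_mem hidx)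
    have happ : p (t + 1) v = L[T - t - 1] (p t v) := by
      show ((L.drop (T - (t + 1))).prod : Equiv.Perm _) v = _
      rw [hd, List.prod_cons, Equiv.Perm.mul_apply]
    by_cases hcase : L[T - t - 1] (p t v) = p t v
    · left; rw [happ, hcase]
    · right; rw [happ]; exact hσ.2 _ hcase
  by_contra hcon
  push_neg at hcon
  rw [lt_min_iff] at hcon
  obtain ⟨hcon1, hcon2⟩ := hcon
  by_cases hA : ∃ j, j < l ∧ ∃ v : Fin (N + 1), (v = WA N l j ∨ v = WB N l j) ∧
      ∀ t, t ≤ T → (p t v).val ≠ N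
  · -- some moved vertex avoids the hub: distance argument
    obtain ⟨j, hj, v, hv, havoid⟩ := hA
    have key : ∀ t, t ≤ T → ∃ k : ℤ, k.natAbs ≤ t ∧
        ((p t v).val : ZMod N) = (v.val : ZMod N) + k := by
      intro t
      induction t with
      | zero => intro _; exact ⟨0, le_refl 0, by rw [hp0 v]; push_cast; ring⟩
      | succ t ih =>
        intro ht
        obtain ⟨k, hk, hkeq⟩ := ih (by omega)
        rcases hstep t (by omega) v with heq | hadj
        · exact ⟨k, le_trans hk (Nat.le_succ t), by rw [heq, hkeq]⟩
        · have hx : (p t v).val < N := by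
            have h1 := havoid t (by omega); have h2 := (p t v).isLt; omega
          have hy : (p (t + 1) v).val < N := by
            have h1 := havoid (t + 1) ht; have h2 := (p (t + 1) v).isLt; omega
          obtain ⟨hne, hcases⟩ := (show _ ∧ _ from hadj)
          rcases hcases with ⟨_, _, hrim⟩ | hhub | hhub
          · rcases hrim with h1 | h1
            · refine ⟨k + 1, ?_, ?_⟩
              · calc (k + 1).natAbs ≤ k.natAbs + (1 : ℤ).natAbs := Int.natAbs_add_le k 1
                  _ ≤ t + 1 := by simp; omega
              · have h2 : ((p (t + 1) v).val : ZMod N) = ((p t v).val : ZMod N) + 1 := by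
                  rw [← h1, ZMod.natCast_mod]; push_cast; ring
                rw [h2, hkeq]; push_cast; ring
            · refine ⟨k - 1, ?_, ?_⟩
              · calc (k - 1).natAbs ≤ k.natAbs + (1 : ℤ).natAbs := Int.natAbs_sub_le k 1
                  _ ≤ t + 1 := by simp; omega
              · have h2 : ((p t v).val : ZMod N) = ((p (t + 1) v).val : ZMod N) + 1 := by
                  rw [← h1, ZMod.natCast_mod]; push_cast; ring
                have h3 : ((p (t + 1) v).val : ZMod N) = ((p t v).val : ZMod N) - 1 := by
                  rw [h2]; ring
                rw [h3, hkeq]; push_cast; ring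
          · omega
          · omega
    obtain ⟨k, hkT, hkeq⟩ := key T le_rfl
    rw [hpT] at hkeq
    set D : ℕ := N / l - 1 with hD
    have hDbound : D + T < N := by omega
    have hAval := WA_val hl hdvd hj
    have hBval := WB_val' hl hdvd hm hj
    rcases hv with rfl | rfl
    · rw [wheelPerm_WA hl hdvd hm hj, hBval, hAval] at hkeq
      have hzero : (((D : ℤ) - k : ℤ) : ZMod N) = 0 := by
        rw [← hD] at hkeq
        push_cast at hkeq ⊢
        linear_combination hkeq
      have hdvd' : (N : ℤ) ∣ ((D : ℤ) - k) := (ZMod.intCast_zmod_eq_zero_iff_dvd _ N).mp hzero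
      have habs : ((D : ℤ) - k).natAbs < N := by
        have := Int.natAbs_sub_le (D : ℤ) k
        simp only [Int.natAbs_natCast] at this
        omega
      have : (D : ℤ) - k = 0 := Int.eq_zero_of_abs_lt_dvd hdvd'
        (by rw [Int.abs_eq_natAbs]; exact_mod_cast habs)
      have hkD : k = (D : ℤ) := by omega
      rw [hkD] at hkT
      simp only [Int.natAbs_natCast] at hkT
      omega
    · rw [wheelPerm_WB hl hdvd hm hj, hAval, hBval] at hkeq
      have hzero : (((D : ℤ) + k : ℤ) : ZMod N) = 0 := by
        rw [← hD] at hkeq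
        push_cast at hkeq ⊢
        linear_combination -hkeq
      have hdvd' : (N : ℤ) ∣ ((D : ℤ) + k) := (ZMod.intCast_zmod_eq_zero_iff_dvd _ N).mp hzero
      have habs : ((D : ℤ) + k).natAbs < N := by
        have := Int.natAbs_add_le (D : ℤ) k
        simp only [Int.natAbs_natCast] at this
        omega
      have : (D : ℤ) + k = 0 := Int.eq_zero_of_abs_lt_dvd hdvd'
        (by rw [Int.abs_eq_natAbs]; exact_mod_cast habs)
      have hkD : k = -(D : ℤ) := by omega
      rw [hkD] at hkT
      simp only [Int.natAbs_neg, Int.natAbs_natCast] at hkT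
      omega
  · -- every moved vertex visits the hub: counting argument
    push_neg at hA
    set S : Finset (Fin (N + 1)) :=
      (Finset.range l).image (WA N l) ∪ (Finset.range l).image (WB N l) with hS
    have hmem : ∀ v ∈ S, ∃ j, j < l ∧ (v = WA N l j ∨ v = WB N l j) := by
      intro v hv
      rw [hS, Finset.mem_union, Finset.mem_image, Finset.mem_image] at hv
      rcases hv with ⟨j, hj, rfl⟩ | ⟨j, hj, rfl⟩
      · exact ⟨j, Finset.mem_range.mp hj, Or.inl rfl⟩
      · exact ⟨j, Finset.mem_range.mp hj, Or.inr rfl⟩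
    have hcard : S.card = 2 * l := by
      rw [hS, Finset.card_union_of_disjoint, Finset.card_image_of_injOn,
        Finset.card_image_of_injOn, Finset.card_range]
      · ring
      · intro i hi j hj h
        exact WB_inj hl hdvd hm (Finset.mem_range.mp hi) (Finset.mem_range.mp hj) h
      · intro i hi j hj h
        exact WA_inj hl hdvd hm (Finset.mem_range.mp hi) (Finset.mem_range.mp hj) h
      · rw [Finset.disjoint_left]
        rintro v hv1 hv2
        rw [Finset.mem_image] at hv1 hv2
        obtain ⟨i, hi, rfl⟩ := hv1
        obtain ⟨j, hj, hji⟩ := hv2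
        exact WA_ne_WB hl hdvd hm (Finset.mem_range.mp hi) (Finset.mem_range.mp hj) hji.symm
    have hex : ∀ v ∈ S, ∃ t, t ≤ T ∧ (p t v).val = N := by
      intro v hv
      obtain ⟨j, hj, hcase⟩ := hmem v hv
      exact hA j hj v hcase
    choose! tf ht1 ht2 using hex
    have hmaps : ∀ v ∈ S, tf v ∈ Finset.Ioo 0 T := by
      intro v hv
      obtain ⟨j, hj, hcase⟩ := hmem v hv
      have hvlt : v.val < N := by
        rcases hcase with rfl | rfl
        exacts [WA_lt hl hdvd hm hj, WB_lt hl hdvd hm hj]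
      have himglt : (wheelPerm N l v).val < N := by
        rcases hcase with rfl | rfl
        · rw [wheelPerm_WA hl hdvd hm hj]; exact WB_lt hl hdvd hm hj
        · rw [wheelPerm_WB hl hdvd hm hj]; exact WA_lt hl hdvd hm hj
      have h2 := ht2 v hv
      have htv0 : tf v ≠ 0 := by
        intro h0; rw [h0, hp0] at h2; omega
      have htvT : tf v ≠ T := by
        intro hTeq; rw [hTeq, hpT] at h2; omega
      have := ht1 v hv
      rw [Finset.mem_Ioo]
      omega
    have hInj : Set.InjOn tf S := by
      intro v hv w hw heq
      have h1 := ht2 v hv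
      have h2 := ht2 w hw
      rw [← heq] at h2
      exact (p (tf v)).injective (Fin.val_injective (h1.trans h2.symm))
    have hle := Finset.card_le_card_of_injOn tf hmaps hInj
    rw [hcard, Nat.card_Ioo] at hle
    omega

end Vals

end Aux

/-- Lower bound on the swap routing time of `π_wheel^l` on the wheel graph:
`rt_S(W_{N+1}, π_wheel^l) ≥ min {2l, N/l − 1}`. -/
theorem wheelPerm_routing_lower (N l : ℕ) (hN : 0 < N) (hl : 2 ≤ l) (hdvd : l ∣ N) :
    min (2 * l) (N / l - 1) ≤ rtS (wheelGraph N) (wheelPerm N l) := by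
  rcases le_or_gt (N / l) 1 with h | h
  · calc min (2 * l) (N / l - 1) ≤ N / l - 1 := min_le_right _ _
      _ = 0 := by omega
      _ ≤ _ := Nat.zero_le _
  · have hm : 2 ≤ N / l := h
    obtain ⟨L, hlen, hr, hp⟩ := Nat.sInf_mem (routing_set_nonempty hl hdvd hm)
    calc min (2 * l) (N / l - 1) ≤ L.length := main_bound hl hdvd hm L hr hp
      _ = _ := hlen
end

section
/- Let G be a finite connected simple graph on N ≥ 2 vertices and, for each vertex w, let the horizon ρ(w) be the largest nonnegative integer k such that the ball D(w,k) = {u : d(u,w) ≤ k} satisfies |D(w,k)| ≤ N/2. Then for all vertices u, v, the distance satisfies d(u,v) ≤ ρ(u) + ρ(v) + 2. -/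
/-- The ball `D(v,k)` of radius `k` around `v`: all vertices at distance at most `k`. -/
noncomputable def distBall {V : Type*} [Fintype V] (G : SimpleGraph V) (v : V) (k : ℕ) :
    Finset V :=
  @Finset.filter _ (fun u => G.dist v u ≤ k) (Classical.decPred _) Finset.univ

/-- The horizon `ρ(w)`: the largest `k` such that `|D(w,k)| ≤ N/2`. -/
noncomputable def horizon {V : Type*} [Fintype V] (G : SimpleGraph V) (w : V) : ℕ :=
  sSup {k : ℕ | 2 * (distBall G w k).card ≤ Fintype.card V}

lemma dist_lt_card' {V : Type*} [Fintype V] {G : SimpleGraph V} (hG : G.Connected) (u v : V) :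
    G.dist u v < Fintype.card V := by
  classical
  obtain ⟨p⟩ := hG u v
  calc G.dist u v ≤ p.toPath.1.length := SimpleGraph.dist_le _
    _ < Fintype.card V := p.toPath.2.length_lt

lemma bddAbove_horizonSet {V : Type*} [Fintype V] {G : SimpleGraph V} (hG : G.Connected)
    (hN : 2 ≤ Fintype.card V) (w : V) :
    BddAbove {k : ℕ | 2 * (distBall G w k).card ≤ Fintype.card V} := by
  refine ⟨Fintype.card V, fun k hk => ?_⟩
  simp only [Set.mem_setOf_eq] at hk
  by_contra h
  push_neg at h
  have hball : distBall G w k = Finset.univ := by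
    apply Finset.eq_univ_of_forall
    intro x
    simp only [distBall, Finset.mem_filter, Finset.mem_univ, true_and]
    exact le_trans (le_of_lt (dist_lt_card' hG w x)) (le_of_lt h)
  rw [hball, Finset.card_univ] at hk
  omega

lemma horizon_succ_big {V : Type*} [Fintype V] {G : SimpleGraph V} (hG : G.Connected)
    (hN : 2 ≤ Fintype.card V) (w : V) :
    Fintype.card V < 2 * (distBall G w (horizon G w + 1)).card := by
  by_contra h
  push_neg at h
  have : horizon G w + 1 ≤ horizon G w :=
    le_csSup (bddAbove_horizonSet hG hN w) h
  omega

/-- For a finite connected simple graph on `N ≥ 2` vertices, any two vertices are at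
distance at most `ρ(u) + ρ(v) + 2`, where `ρ` is the horizon. -/
theorem dist_le_horizon_add {V : Type*} [Fintype V] (G : SimpleGraph V)
    (hG : G.Connected) (hN : 2 ≤ Fintype.card V) (u v : V) :
    G.dist u v ≤ horizon G u + horizon G v + 2 := by
  classical
  have hu := horizon_succ_big hG hN u
  have hv := horizon_succ_big hG hN v
  have hinter : ((distBall G u (horizon G u + 1)) ∩ (distBall G v (horizon G v + 1))).Nonempty := by
    rw [← Finset.card_pos]
    have hunion : ((distBall G u (horizon G u + 1)) ∪ (distBall G v (horizon G v + 1))).card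
        ≤ Fintype.card V := Finset.card_le_univ _
    have := Finset.card_union_add_card_inter (distBall G u (horizon G u + 1))
      (distBall G v (horizon G v + 1))
    omega
  obtain ⟨w, hw⟩ := hinter
  rw [Finset.mem_inter] at hw
  obtain ⟨hw1, hw2⟩ := hw
  simp only [distBall, Finset.mem_filter, Finset.mem_univ, true_and] at hw1 hw2
  calc G.dist u v ≤ G.dist u w + G.dist w v := hG.dist_triangle
    _ = G.dist u w + G.dist v w := by rw [show G.dist w v = G.dist v w from SimpleGraph.dist_comm ..]
    _ ≤ (horizon G u + 1) + (horizon G v + 1) := Nat.add_le_add hw1 hw2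
    _ = horizon G u + horizon G v + 2 := by ring
end
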